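/- arXiv:2506.15419 — 3 statements merged into one kernel-verified Lean document; each statement's English description precedes it below -/
import Mathlib

section
/- Let h : ℝ^d → ℝ satisfy ‖h‖_{0,β,p,q} := sup_{x ∈ ℝ^d} |exp(β‖x‖_p^q) h(x)| < ∞ for some β > 0, 1 ≤ p ≤ ∞, 1 ≤ q < ∞. Define the wrapped function h̃(x) = ∑_{k ∈ ℤ^d} h(x + 2a·k) for x ∈ [−a,a]^d. Then for any a ≥ β^{−1/q} and any x ∈ [−a,a]^d, |h(x) − h̃(x)| ≤ C_{d,q} · ‖h‖_{0,β,p,q} · exp(−β a^q), where C_{d,q} = ∑_{w=1}^∞ ((2w+1)^d − (2w−1)^d) e^{−((2w−1)^q − 1)}. -/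
open scoped ENNReal

/-- The constant `C_{d,q} = ∑_{w=1}^∞ ((2w+1)^d − (2w−1)^d) e^{−((2w−1)^q − 1)}`. -/
noncomputable def Cdq (d : ℕ) (q : ℝ) : ℝ :=
  ∑' w : ℕ, ((2 * ((w : ℝ) + 1) + 1) ^ d - (2 * ((w : ℝ) + 1) - 1) ^ d) *
    Real.exp (-((2 * ((w : ℝ) + 1) - 1) ^ q - 1))

/-- The `ℓ_p` norm on `ℝ^d`, `1 ≤ p ≤ ∞`, via the `PiLp` norm. -/
noncomputable def pnorm (d : ℕ) (p : ℝ≥0∞) (x : Fin d → ℝ) : ℝ :=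
  ‖(WithLp.equiv p (Fin d → ℝ)).symm x‖

namespace Stmt2Aux

lemma coord_le_pnorm {d : ℕ} {p : ℝ≥0∞} (hp : 1 ≤ p) (y : Fin d → ℝ) (i : Fin d) :
    |y i| ≤ pnorm d p y := by
  unfold pnorm
  rcases eq_or_ne p ∞ with rfl | hptop
  · rw [WithLp.equiv_symm_apply, PiLp.norm_toLp]
    simpa using norm_le_pi_norm y i
  · have hp0 : p ≠ 0 := by
      intro h; rw [h] at hp; exact absurd hp (by simp)
    have hpt : 0 < p.toReal := ENNReal.toReal_pos hp0 hptop
    rw [PiLp.norm_eq_sum hpt]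
    have h1 : |y i| ^ p.toReal ≤ ∑ j, ‖((WithLp.equiv p (Fin d → ℝ)).symm y) j‖ ^ p.toReal := by
      have := Finset.single_le_sum
        (f := fun j => ‖((WithLp.equiv p (Fin d → ℝ)).symm y) j‖ ^ p.toReal)
        (fun j _ => Real.rpow_nonneg (norm_nonneg _) _) (Finset.mem_univ i)
      simpa [Real.norm_eq_abs] using this
    calc |y i| = (|y i| ^ p.toReal) ^ (1 / p.toReal) := by
          rw [one_div, Real.rpow_rpow_inv (abs_nonneg _) hpt.ne']
      _ ≤ _ := Real.rpow_le_rpow (Real.rpow_nonneg (abs_nonneg _) _) h1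
          (by positivity)

/-- the `ℓ∞` norm (as a natural number) of an integer vector -/
def Nk {d : ℕ} (k : Fin d → ℤ) : ℕ := Finset.univ.sup fun i => (k i).natAbs

lemma Nk_zero {d : ℕ} : Nk (0 : Fin d → ℤ) = 0 := by simp [Nk]

lemma Nk_pos {d : ℕ} {k : Fin d → ℤ} (hk : k ≠ 0) : 1 ≤ Nk k := by
  by_contra hlt
  push_neg at hlt
  interval_cases hNk : Nk k
  apply hk
  funext i
  simp only [Pi.zero_apply]
  have h2 : (k i).natAbs ≤ Nk k :=
    Finset.le_sup (f := fun j => (k j).natAbs) (Finset.mem_univ i)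
  omega

noncomputable def box (d m : ℕ) : Finset (Fin d → ℤ) := Fintype.piFinset fun _ => Finset.Icc (-(m : ℤ)) m

lemma mem_box {d m : ℕ} {k : Fin d → ℤ} : k ∈ box d m ↔ Nk k ≤ m := by
  simp only [box, Fintype.mem_piFinset, Finset.mem_Icc, Nk, Finset.sup_le_iff,
    Finset.mem_univ, forall_true_left]
  constructor <;> intro H i <;> have := H i <;> omega

lemma card_box (d m : ℕ) : (box d m).card = (2 * m + 1) ^ d := by
  rw [box, Fintype.card_piFinset]
  simp only [Finset.prod_const, Finset.card_univ, Fintype.card_fin, Int.card_Icc]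
  congr 1
  omega

noncomputable def shellF (d m : ℕ) : Finset (Fin d → ℤ) := box d (m + 1) \ box d m

lemma mem_shellF {d m : ℕ} {k : Fin d → ℤ} : k ∈ shellF d m ↔ Nk k = m + 1 := by
  simp only [shellF, Finset.mem_sdiff, mem_box]
  omega

lemma card_shellF (d m : ℕ) :
    (shellF d m).card = (2 * (m + 1) + 1) ^ d - (2 * m + 1) ^ d := by
  rw [shellF, Finset.card_sdiff_of_subset (fun k hk => mem_box.mpr ((mem_box.mp hk).trans (by omega))),
    card_box, card_box]

/-- the equivalence between nonzero lattice points and shells -/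
def shellEquiv (d : ℕ) :
    {k : Fin d → ℤ // k ∉ ({0} : Finset (Fin d → ℤ))} ≃
      Σ m : ℕ, {k : Fin d → ℤ // k ∈ shellF d m} where
  toFun z := ⟨Nk z.1 - 1, ⟨z.1, by
    have h0 : z.1 ≠ 0 := by simpa using z.2
    have := Nk_pos h0
    rw [mem_shellF]; omega⟩⟩
  invFun σ := ⟨σ.2.1, by
    have := mem_shellF.mp σ.2.2
    simp only [Finset.mem_singleton]
    intro h0
    rw [h0, Nk_zero] at this
    omega⟩
  left_inv z := rfl
  right_inv σ := by
    obtain ⟨m, k, hk⟩ := σ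
    have h1 := mem_shellF.mp hk
    exact Sigma.subtype_ext (show Nk k - 1 = m by omega) rfl

/-- The general term of the `Cdq` series. -/
noncomputable def tt (d : ℕ) (q : ℝ) (m : ℕ) : ℝ :=
  ((2 * ((m : ℝ) + 1) + 1) ^ d - (2 * ((m : ℝ) + 1) - 1) ^ d) *
    Real.exp (-((2 * ((m : ℝ) + 1) - 1) ^ q - 1))

lemma tt_nonneg (d : ℕ) {q : ℝ} (m : ℕ) : 0 ≤ tt d q m := by
  apply mul_nonneg _ (Real.exp_pos _).le
  have hm : (0:ℝ) ≤ (m : ℝ) := Nat.cast_nonneg m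
  have h1 : (0:ℝ) ≤ 2 * ((m : ℝ) + 1) - 1 := by linarith
  exact sub_nonneg.mpr (pow_le_pow_left₀ h1 (by linarith) d)

lemma summable_tt (d : ℕ) {q : ℝ} (hq : 1 ≤ q) : Summable (tt d q) := by
  set r : ℝ := Real.exp (-2) with hr
  have hr0 : 0 < r := Real.exp_pos _
  have hr1 : ‖r‖ < 1 := by
    rw [Real.norm_eq_abs, abs_of_pos hr0]
    exact Real.exp_lt_one_iff.mpr (by norm_num)
  have hs0 : Summable fun n : ℕ => (n : ℝ) ^ d * r ^ n :=
    summable_pow_mul_geometric_of_norm_lt_one d hr1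
  have hs1 : Summable fun n : ℕ => ((n : ℝ) + 1) ^ d * r ^ (n + 1) := by
    have := (summable_nat_add_iff 1).mpr hs0
    simpa using this
  have hs2 : Summable fun n : ℕ => ((n : ℝ) + 1) ^ d * r ^ n := by
    have := hs1.mul_left r⁻¹
    apply this.congr
    intro n
    field_simp
    ring
  have hs3 : Summable fun n : ℕ => (3:ℝ) ^ d * (((n : ℝ) + 1) ^ d * r ^ n) := hs2.mul_left _
  apply Summable.of_nonneg_of_le (fun m => tt_nonneg d m) _ hs3
  intro m
  have hm : (0:ℝ) ≤ (m : ℝ) := Nat.cast_nonneg m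
  have h1 : (0:ℝ) ≤ 2 * ((m : ℝ) + 1) - 1 := by linarith
  have hbase : (1:ℝ) ≤ 2 * ((m : ℝ) + 1) - 1 := by
    have : (0:ℝ) ≤ (m : ℝ) := Nat.cast_nonneg m
    linarith
  have hexp : Real.exp (-((2 * ((m : ℝ) + 1) - 1) ^ q - 1)) ≤ r ^ m := by
    have hle : (2 * ((m : ℝ) + 1) - 1) ≤ (2 * ((m : ℝ) + 1) - 1) ^ q := by
      calc (2 * ((m : ℝ) + 1) - 1) = (2 * ((m : ℝ) + 1) - 1) ^ (1:ℝ) := (Real.rpow_one _).symm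
        _ ≤ _ := Real.rpow_le_rpow_of_exponent_le hbase hq
    have : r ^ m = Real.exp (-(2 * m)) := by
      rw [hr, ← Real.exp_nat_mul]
      ring_nf
    rw [this, Real.exp_le_exp]
    push_cast
    linarith
  have hpow : ((2 * ((m : ℝ) + 1) + 1) ^ d - (2 * ((m : ℝ) + 1) - 1) ^ d)
      ≤ 3 ^ d * ((m : ℝ) + 1) ^ d := by
    have h2 : (2 * ((m : ℝ) + 1) + 1) ^ d ≤ (3 * ((m : ℝ) + 1)) ^ d := by
      apply pow_le_pow_left₀ (by positivity)
      have : (0:ℝ) ≤ (m : ℝ) := Nat.cast_nonneg m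
      linarith
    have h3 : (0:ℝ) ≤ (2 * ((m : ℝ) + 1) - 1) ^ d := pow_nonneg h1 d
    calc _ ≤ (3 * ((m : ℝ) + 1)) ^ d := by linarith
      _ = 3 ^ d * ((m : ℝ) + 1) ^ d := mul_pow _ _ _
  calc tt d q m ≤ (3 ^ d * ((m : ℝ) + 1) ^ d) * r ^ m := by
        apply mul_le_mul hpow hexp (Real.exp_pos _).le
        positivity
    _ = 3 ^ d * (((m : ℝ) + 1) ^ d * r ^ m) := by ring

end Stmt2Aux

set_option maxHeartbeats 1000000 in
open Stmt2Aux in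
/-- If `sup_x |exp(β‖x‖_p^q) h(x)| ≤ Cn < ∞` for some `β > 0`,
`1 ≤ p ≤ ∞`, `1 ≤ q < ∞`, and `h̃(x) = ∑_{k ∈ ℤ^d} h(x + 2a k)` is the wrapped
function, then for any `a ≥ β^{−1/q}` and any `x ∈ [−a,a]^d`,
`|h(x) − h̃(x)| ≤ C_{d,q} · Cn · exp(−β a^q)`. -/
theorem stmt2 (d : ℕ) (β q : ℝ) (hβ : 0 < β) (hq : 1 ≤ q) (p : ℝ≥0∞) (hp : 1 ≤ p)
    (h : (Fin d → ℝ) → ℝ) (Cn : ℝ)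
    (hCn : ∀ x : Fin d → ℝ, |Real.exp (β * pnorm d p x ^ q) * h x| ≤ Cn)
    (a : ℝ) (ha : β ^ (-1 / q) ≤ a) (x : Fin d → ℝ) (hx : ‖x‖ ≤ a) :
    |h x - ∑' k : Fin d → ℤ, h (x + (2 * a) • (fun i => (k i : ℝ)))| ≤
      Cdq d q * Cn * Real.exp (-β * a ^ q) := by
  have hq0 : (0:ℝ) < q := lt_of_lt_of_le one_pos hq
  have hCn0 : 0 ≤ Cn := (abs_nonneg _).trans (hCn 0)
  have ha0 : 0 < a := lt_of_lt_of_le (Real.rpow_pos_of_pos hβ _) ha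
  -- β * a ^ q ≥ 1
  have hβaq : 1 ≤ β * a ^ q := by
    have h1 : (β ^ (-1 / q)) ^ q ≤ a ^ q :=
      Real.rpow_le_rpow (Real.rpow_pos_of_pos hβ _).le ha hq0.le
    have h2 : (β ^ (-1 / q)) ^ q = β⁻¹ := by
      rw [← Real.rpow_mul hβ.le, neg_div, neg_mul, div_mul_cancel₀ _ hq0.ne',
        Real.rpow_neg_one]
    have h3 : β * β⁻¹ ≤ β * a ^ q := mul_le_mul_of_nonneg_left (h2 ▸ h1) hβ.le
    rwa [mul_inv_cancel₀ hβ.ne'] at h3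
  set c : ℝ := Cn * Real.exp (-β * a ^ q) with hc
  have hc0 : 0 ≤ c := mul_nonneg hCn0 (Real.exp_pos _).le
  set F : (Fin d → ℤ) → ℝ := fun k => h (x + (2 * a) • (fun i => ((k i : ℝ)))) with hF
  -- pointwise bound
  have key : ∀ k : Fin d → ℤ, k ≠ 0 →
      |F k| ≤ c * Real.exp (-((2 * ((Nk k : ℝ)) - 1) ^ q - 1)) := by
    intro k hk
    set y : Fin d → ℝ := x + (2 * a) • (fun i => ((k i : ℝ))) with hy
    set w : ℕ := Nk k with hw
    have hw1 : 1 ≤ w := Nk_pos hk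
    -- find coordinate achieving the sup
    obtain ⟨i0, hi0⟩ : ∃ i, k i ≠ 0 := by
      by_contra hcon; push_neg at hcon; exact hk (funext fun i => hcon i)
    obtain ⟨i, -, hi⟩ := Finset.exists_mem_eq_sup Finset.univ ⟨i0, Finset.mem_univ i0⟩
      (fun i => (k i).natAbs)
    have hki : ((k i).natAbs : ℝ) = (w : ℝ) := by rw [hw, Nk, hi]
    have hxi : |x i| ≤ a := by
      have := norm_le_pi_norm x i
      rw [Real.norm_eq_abs] at this
      exact this.trans hx
    have hyi : a * (2 * (w:ℝ) - 1) ≤ |y i| := by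
      have hyieq : y i = x i + (2*a) * (k i : ℝ) := by simp [hy]
      have habs : |(2*a) * (k i : ℝ)| = 2*a*(w:ℝ) := by
        rw [abs_mul, abs_of_pos (by linarith : (0:ℝ) < 2*a), ← hki, Nat.cast_natAbs,
          Int.cast_abs]
      have := abs_sub_abs_le_abs_sub ((2*a) * (k i : ℝ)) (-(x i))
      rw [abs_neg, sub_neg_eq_add] at this
      have h2 : |(2*a) * (k i : ℝ) + x i| = |y i| := by rw [hyieq]; ring_nf
      rw [habs, h2] at this
      have hwr : (1:ℝ) ≤ (w:ℝ) := by exact_mod_cast hw1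
      nlinarith
    have hpn : a * (2 * (w:ℝ) - 1) ≤ pnorm d p y := hyi.trans (coord_le_pnorm hp y i)
    have hawpos : (0:ℝ) < a * (2 * (w:ℝ) - 1) := by
      have hwr : (1:ℝ) ≤ (w:ℝ) := by exact_mod_cast hw1
      nlinarith
    -- from hCn
    have hhy : |h y| ≤ Cn * Real.exp (-(β * pnorm d p y ^ q)) := by
      have := hCn y
      rw [abs_mul, Real.abs_exp] at this
      calc |h y| = Real.exp (-(β * pnorm d p y ^ q)) *
            (Real.exp (β * pnorm d p y ^ q) * |h y|) := by
            rw [← mul_assoc, ← Real.exp_add]; simp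
        _ ≤ Real.exp (-(β * pnorm d p y ^ q)) * Cn :=
            mul_le_mul_of_nonneg_left this (Real.exp_pos _).le
        _ = Cn * Real.exp (-(β * pnorm d p y ^ q)) := mul_comm _ _
    have hwr : (1:ℝ) ≤ 2 * (w:ℝ) - 1 := by
      have : (1:ℝ) ≤ (w:ℝ) := by exact_mod_cast hw1
      linarith
    have hs1 : (1:ℝ) ≤ (2 * (w:ℝ) - 1) ^ q := Real.one_le_rpow hwr hq0.le
    have hrp : (a * (2 * (w:ℝ) - 1)) ^ q = a ^ q * (2 * (w:ℝ) - 1) ^ q :=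
      Real.mul_rpow ha0.le (by linarith)
    have hmono : β * (a * (2 * (w:ℝ) - 1)) ^ q ≤ β * pnorm d p y ^ q := by
      apply mul_le_mul_of_nonneg_left _ hβ.le
      exact Real.rpow_le_rpow hawpos.le hpn hq0.le
    have hexp : Real.exp (-(β * pnorm d p y ^ q)) ≤
        Real.exp (-β * a ^ q) * Real.exp (-((2 * (w:ℝ) - 1) ^ q - 1)) := by
      rw [← Real.exp_add, Real.exp_le_exp]
      rw [hrp] at hmono
      nlinarith
    calc |F k| = |h y| := rfl
      _ ≤ Cn * Real.exp (-(β * pnorm d p y ^ q)) := hhy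
      _ ≤ Cn * (Real.exp (-β * a ^ q) * Real.exp (-((2 * (w:ℝ) - 1) ^ q - 1))) :=
          mul_le_mul_of_nonneg_left hexp hCn0
      _ = c * Real.exp (-((2 * ((Nk k : ℝ)) - 1) ^ q - 1)) := by rw [hc, hw]; ring
  -- the sigma-type bound function
  set G : (Σ m : ℕ, {k : Fin d → ℤ // k ∈ shellF d m}) → ℝ :=
    fun σ => c * Real.exp (-((2 * ((σ.1 : ℝ) + 1) - 1) ^ q - 1)) with hG
  have hG0 : ∀ σ, 0 ≤ G σ := fun σ => mul_nonneg hc0 (Real.exp_pos _).le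
  have hcard : ∀ m : ℕ, ((shellF d m).card : ℝ) =
      (2 * ((m : ℝ) + 1) + 1) ^ d - (2 * ((m : ℝ) + 1) - 1) ^ d := by
    intro m
    rw [card_shellF]
    have hle : (2 * m + 1) ^ d ≤ (2 * (m + 1) + 1) ^ d :=
      Nat.pow_le_pow_left (by omega) d
    rw [Nat.cast_sub hle]
    push_cast
    ring_nf
  have hfib : ∀ m : ℕ, ∑' k : {k : Fin d → ℤ // k ∈ shellF d m}, G ⟨m, k⟩ =
      c * tt d q m := by
    intro m
    rw [tsum_fintype]
    have hGc : ∀ b : {k // k ∈ shellF d m},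
        G ⟨m, b⟩ = c * Real.exp (-((2 * ((m:ℝ) + 1) - 1) ^ q - 1)) := fun b => rfl
    rw [Finset.sum_congr rfl (fun b _ => hGc b), Finset.sum_const, nsmul_eq_mul,
      Finset.card_univ, Fintype.card_coe, hcard, tt]
    ring
  have hGsum : Summable G := by
    rw [summable_sigma_of_nonneg hG0]
    constructor
    · intro m; exact .of_finite
    · apply Summable.congr ((summable_tt d hq).mul_left c)
      intro m
      exact (hfib m).symm
  -- summability of |F| on nonzero lattice points
  set e := shellEquiv d with he
  have hFcompl : Summable (fun z : {k : Fin d → ℤ // k ∉ ({0} : Finset (Fin d → ℤ))} =>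
      |F z.1|) := by
    apply Summable.of_nonneg_of_le (fun z => abs_nonneg _) _ (e.summable_iff.mpr hGsum)
    intro z
    have h0 : z.1 ≠ 0 := by simpa using z.2
    have : G (e z) = c * Real.exp (-((2 * ((Nk z.1 - 1 : ℕ) : ℝ) + 2 - 1) ^ q - 1)) := by
      simp only [hG, he, shellEquiv, Equiv.coe_fn_mk, Function.comp_apply]
      ring_nf
    rw [Function.comp_apply] at *
    calc |F z.1| ≤ c * Real.exp (-((2 * ((Nk z.1 : ℝ)) - 1) ^ q - 1)) := key z.1 h0
      _ = G (e z) := by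
          rw [this]
          congr 3
          have := Nk_pos h0
          rw [Nat.cast_sub this]
          push_cast
          ring
  have hFsub : Summable (fun z : {k : Fin d → ℤ // k ∉ ({0} : Finset (Fin d → ℤ))} =>
      F z.1) := Summable.of_norm (by simpa [Real.norm_eq_abs] using hFcompl)
  have hFsum : Summable F := (Finset.summable_compl_iff _).mp hFsub
  -- decompose the sum
  have hF0 : F 0 = h x := by
    simp only [hF]
    congr 1
    funext i
    simp
  have hhs := (Finset.hasSum_compl_iff (f := F) ({0} : Finset (Fin d → ℤ))).mp hFsub.hasSum
  have htsum : ∑' k, F k =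
      (∑' z : {k : Fin d → ℤ // k ∉ ({0} : Finset (Fin d → ℤ))}, F z.1) + F 0 := by
    simpa [Finset.sum_singleton] using hhs.tsum_eq
  have hsplit : h x - ∑' k, F k = -(∑' z : {k : Fin d → ℤ // k ∉ ({0} : Finset (Fin d → ℤ))},
      F z.1) := by
    rw [htsum, hF0]
    ring_nf
  rw [hsplit, abs_neg]
  -- bound the tail
  have htail : |∑' z : {k : Fin d → ℤ // k ∉ ({0} : Finset (Fin d → ℤ))}, F z.1| ≤
      ∑' z : {k : Fin d → ℤ // k ∉ ({0} : Finset (Fin d → ℤ))}, |F z.1| := by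
    simpa [Real.norm_eq_abs] using norm_tsum_le_tsum_norm
      (by simpa [Real.norm_eq_abs] using hFcompl : Summable fun z :
        {k : Fin d → ℤ // k ∉ ({0} : Finset (Fin d → ℤ))} => ‖F z.1‖)
  have hGz : ∀ z : {k : Fin d → ℤ // k ∉ ({0} : Finset (Fin d → ℤ))},
      |F z.1| ≤ G (e z) := by
    intro z
    have h0 : z.1 ≠ 0 := by simpa using z.2
    calc |F z.1| ≤ c * Real.exp (-((2 * ((Nk z.1 : ℝ)) - 1) ^ q - 1)) := key z.1 h0
      _ = G (e z) := by
          simp only [hG, he, shellEquiv, Equiv.coe_fn_mk]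
          congr 3
          have := Nk_pos h0
          rw [Nat.cast_sub this]
          push_cast
          ring
  have hGe : Summable (fun z : {k : Fin d → ℤ // k ∉ ({0} : Finset (Fin d → ℤ))} =>
      G (e z)) := e.summable_iff.mpr hGsum
  have hb1 : ∑' z : {k : Fin d → ℤ // k ∉ ({0} : Finset (Fin d → ℤ))}, |F z.1| ≤
      ∑' z : {k : Fin d → ℤ // k ∉ ({0} : Finset (Fin d → ℤ))}, G (e z) :=
    Summable.tsum_le_tsum hGz hFcompl hGe
  have hb2 : ∑' z : {k : Fin d → ℤ // k ∉ ({0} : Finset (Fin d → ℤ))}, G (e z) =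
      ∑' σ, G σ := e.tsum_eq G
  have hb3 : ∑' σ, G σ = c * Cdq d q := by
    rw [Summable.tsum_sigma hGsum]
    calc ∑' m : ℕ, ∑' k : {k : Fin d → ℤ // k ∈ shellF d m}, G ⟨m, k⟩
        = ∑' m : ℕ, c * tt d q m := by
          congr 1
          funext m
          exact hfib m
      _ = c * ∑' m : ℕ, tt d q m := tsum_mul_left
      _ = c * Cdq d q := rfl
  have hbound : ∑' z : {k : Fin d → ℤ // k ∉ ({0} : Finset (Fin d → ℤ))}, |F z.1| ≤
      c * Cdq d q := by rw [← hb3, ← hb2]; exact hb1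
  calc _ ≤ c * Cdq d q := htail.trans hbound
    _ = Cdq d q * Cn * Real.exp (-β * a ^ q) := by rw [hc]; ring
end

section
/- Suppose f : ℝ^d → ℝ satisfies |f(x)| ≤ C·exp(−β‖x‖_p^q) with C = ‖f‖_{0,β,p,q} and define f̃(x) = ∑_{k ∈ ℤ^d} f(x + 2a·k) on [−a,a]^d. Then for any a ≥ β^{−1/q}, ∫_{[−a,a]^d} |f(x) − f̃(x)|^2 dx ≤ C_{d,q}^2 · C^2 · (2a)^d · exp(−2βa^q). -/
open scoped ENNReal
open MeasureTheory

namespace Stmt7Aux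

variable {d : ℕ}

/-- sup norm of an integer vector -/
def mfun (k : Fin d → ℤ) : ℕ := Finset.univ.sup fun i => (k i).natAbs

lemma mfun_eq_zero {k : Fin d → ℤ} : mfun k = 0 ↔ k = 0 := by
  simp [mfun, Finset.sup_eq_bot_iff, funext_iff, Int.natAbs_eq_zero]

noncomputable def box (d n : ℕ) : Finset (Fin d → ℤ) := Fintype.piFinset fun _ => Finset.Icc (-(n : ℤ)) n

lemma mem_box {n : ℕ} {k : Fin d → ℤ} : k ∈ box d n ↔ mfun k ≤ n := by
  simp only [box, Fintype.mem_piFinset, Finset.mem_Icc, mfun, Finset.sup_le_iff,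
    Finset.mem_univ, forall_true_left]
  constructor
  · intro h i; have := h i; omega
  · intro h i; have := h i; omega

lemma card_box (n : ℕ) : (box d n).card = (2 * n + 1) ^ d := by
  simp only [box, Fintype.card_piFinset, Int.card_Icc]
  rw [Finset.prod_const, Finset.card_univ, Fintype.card_fin]
  congr 1
  omega

noncomputable def shell (d w : ℕ) : Finset (Fin d → ℤ) := (box d w).filter fun k => mfun k = w

lemma mem_shell {w : ℕ} {k : Fin d → ℤ} : k ∈ shell d w ↔ mfun k = w := by
  simp only [shell, Finset.mem_filter, mem_box]
  exact ⟨fun h => h.2, fun h => ⟨le_of_eq h, h⟩⟩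

lemma card_shell (w : ℕ) :
    ((shell d (w + 1)).card : ℝ) = (2 * ((w : ℝ) + 1) + 1) ^ d - (2 * ((w : ℝ) + 1) - 1) ^ d := by
  have hsub : box d w ⊆ box d (w + 1) := by
    intro k hk; rw [mem_box] at *; omega
  have hshell : shell d (w + 1) = box d (w + 1) \ box d w := by
    ext k; simp only [mem_shell, Finset.mem_sdiff, mem_box]; omega
  have hle : (box d w).card ≤ (box d (w + 1)).card := Finset.card_le_card hsub
  rw [hshell, Finset.card_sdiff_of_subset hsub, Nat.cast_sub hle, card_box, card_box]
  push_cast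
  have h1 : 2 * ((w : ℝ) + 1) + 1 = ((2 * (w + 1) + 1 : ℕ) : ℝ) := by push_cast; ring
  have h2 : 2 * ((w : ℝ) + 1) - 1 = ((2 * w + 1 : ℕ) : ℝ) := by push_cast; ring
  rw [h1, h2]
  push_cast
  ring

end Stmt7Aux

namespace Stmt7Aux

/-- The summand: `e^{-((2 mfun(k) - 1)^q - 1)}` away from `k = 0`. -/
noncomputable def Gfun (d : ℕ) (q : ℝ) (k : Fin d → ℤ) : ℝ :=
  if k = 0 then 0 else Real.exp (-((2 * (mfun k : ℝ) - 1) ^ q - 1))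

lemma Gfun_nonneg (q : ℝ) (k : Fin d → ℤ) : 0 ≤ Gfun d q k := by
  unfold Gfun; split
  · exact le_refl 0
  · positivity

noncomputable def Sfun (d : ℕ) (q : ℝ) (w : ℕ) : ℝ := ∑ k ∈ shell d w, Gfun d q k

lemma shell_zero : shell d 0 = {0} := by
  ext k; simp [mem_shell, mfun_eq_zero]

lemma Sfun_zero (q : ℝ) : Sfun d q 0 = 0 := by
  simp [Sfun, shell_zero, Gfun]

lemma Sfun_succ (q : ℝ) (w : ℕ) :
    Sfun d q (w + 1) = ((2 * ((w : ℝ) + 1) + 1) ^ d - (2 * ((w : ℝ) + 1) - 1) ^ d) *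
      Real.exp (-((2 * ((w : ℝ) + 1) - 1) ^ q - 1)) := by
  have hconst : ∀ k ∈ shell d (w + 1),
      Gfun d q k = Real.exp (-((2 * ((w : ℝ) + 1) - 1) ^ q - 1)) := by
    intro k hk
    rw [mem_shell] at hk
    have hk0 : k ≠ 0 := by
      intro h
      rw [← mfun_eq_zero] at h
      omega
    have hcast : (mfun k : ℝ) = (w : ℝ) + 1 := by rw [hk]; push_cast; ring
    rw [Gfun, if_neg hk0, hcast]
  rw [Sfun, Finset.sum_congr rfl hconst, Finset.sum_const, nsmul_eq_mul, card_shell]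

end Stmt7Aux

namespace Stmt7Aux

lemma summable_Sfun (q : ℝ) (hq : 1 ≤ q) : Summable (Sfun d q) := by
  have hr : ‖Real.exp (-2)‖ < 1 := by
    rw [Real.norm_eq_abs, abs_of_pos (Real.exp_pos _)]
    exact Real.exp_lt_one_iff.mpr (by norm_num)
  have hgeo : Summable (fun w : ℕ => (3 : ℝ) ^ d * Real.exp 2 * ((w : ℝ) ^ d * Real.exp (-2) ^ w)) :=
    (summable_pow_mul_geometric_of_norm_lt_one d hr).mul_left _
  apply hgeo.of_nonneg_of_le
  · intro w
    exact Finset.sum_nonneg fun k _ => Gfun_nonneg q k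
  · intro w
    cases w with
    | zero =>
      rw [Sfun_zero]
      positivity
    | succ w =>
      rw [Sfun_succ]
      have hNle : (2 * ((w : ℝ) + 1) + 1) ^ d - (2 * ((w : ℝ) + 1) - 1) ^ d
          ≤ (3 : ℝ) ^ d * ((w : ℝ) + 1) ^ d := by
        have h1 : (0:ℝ) ≤ (2 * ((w : ℝ) + 1) - 1) ^ d := by
          apply pow_nonneg; nlinarith [Nat.cast_nonneg (α := ℝ) w]
        have h2 : (2 * ((w : ℝ) + 1) + 1) ^ d ≤ (3 * ((w : ℝ) + 1)) ^ d := by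
          apply pow_le_pow_left₀ (by positivity) (by nlinarith [Nat.cast_nonneg (α := ℝ) w])
        have h3 : (3 * ((w : ℝ) + 1)) ^ d = (3:ℝ) ^ d * ((w : ℝ) + 1) ^ d := mul_pow 3 _ d
        linarith
      have hbase : (1 : ℝ) ≤ 2 * ((w : ℝ) + 1) - 1 := by
        nlinarith [Nat.cast_nonneg (α := ℝ) w]
      have hEle : Real.exp (-((2 * ((w : ℝ) + 1) - 1) ^ q - 1))
          ≤ Real.exp 2 * Real.exp (-2) ^ (w + 1) := by
        have hpow : 2 * ((w : ℝ) + 1) - 1 ≤ (2 * ((w : ℝ) + 1) - 1) ^ q := by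
          calc 2 * ((w : ℝ) + 1) - 1 = (2 * ((w : ℝ) + 1) - 1) ^ (1 : ℝ) := (Real.rpow_one _).symm
            _ ≤ _ := Real.rpow_le_rpow_of_exponent_le hbase hq
        rw [← Real.exp_nat_mul, ← Real.exp_add]
        apply Real.exp_le_exp.mpr
        push_cast
        nlinarith
      have hNnonneg : (0 : ℝ) ≤ (2 * ((w : ℝ) + 1) + 1) ^ d - (2 * ((w : ℝ) + 1) - 1) ^ d := by
        have : (2 * ((w : ℝ) + 1) - 1) ^ d ≤ (2 * ((w : ℝ) + 1) + 1) ^ d := by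
          apply pow_le_pow_left₀ (by nlinarith [Nat.cast_nonneg (α := ℝ) w]) (by nlinarith)
        linarith
      calc ((2 * ((w : ℝ) + 1) + 1) ^ d - (2 * ((w : ℝ) + 1) - 1) ^ d) *
            Real.exp (-((2 * ((w : ℝ) + 1) - 1) ^ q - 1))
          ≤ ((3 : ℝ) ^ d * ((w : ℝ) + 1) ^ d) * (Real.exp 2 * Real.exp (-2) ^ (w + 1)) := by
            apply mul_le_mul hNle hEle (Real.exp_pos _).le (by positivity)
        _ = (3 : ℝ) ^ d * Real.exp 2 * (((w : ℕ) + 1 : ℕ) ^ d * Real.exp (-2) ^ (w + 1) : ℝ) := by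
            push_cast; ring

end Stmt7Aux

namespace Stmt7Aux

lemma setOf_mfun_eq (w : ℕ) : {k : Fin d → ℤ | mfun k = w} = ↑(shell d w) := by
  ext k; simp [mem_shell]

lemma tsum_fiber (q : ℝ) (w : ℕ) :
    ∑' k : {k : Fin d → ℤ // mfun k = w}, Gfun d q k.1 = Sfun d q w := by
  have h2 : ∑' k : ({k : Fin d → ℤ | mfun k = w} : Set _), Gfun d q k.1 = Sfun d q w := by
    rw [setOf_mfun_eq]
    exact Finset.tsum_subtype' _ _
  exact h2

lemma finite_fiber (w : ℕ) : Finite {k : Fin d → ℤ // mfun k = w} := by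
  have h : ({k : Fin d → ℤ | mfun k = w}).Finite := by
    rw [setOf_mfun_eq]; exact (shell d w).finite_toSet
  exact h.to_subtype

lemma summable_Gfun (q : ℝ) (hq : 1 ≤ q) : Summable (Gfun d q) := by
  have hfibsum : ∀ w : ℕ, Summable fun k : {k : Fin d → ℤ // mfun k = w} => Gfun d q k.1 :=
    fun w => by haveI := finite_fiber (d := d) w; exact Summable.of_finite
  have hsig : Summable fun p : Σ w : ℕ, {k : Fin d → ℤ // mfun k = w} => Gfun d q p.2.1 := by
    rw [summable_sigma_of_nonneg (fun p => Gfun_nonneg q _)]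
    refine ⟨hfibsum, ?_⟩
    have he : (fun w => ∑' k : {k : Fin d → ℤ // mfun k = w}, Gfun d q k.1) = Sfun d q :=
      funext (tsum_fiber q)
    rw [he]
    exact summable_Sfun q hq
  have := (Equiv.sigmaFiberEquiv (mfun (d := d))).summable_iff (f := Gfun d q)
  rw [← this]
  exact hsig

lemma tsum_Gfun (q : ℝ) (hq : 1 ≤ q) : ∑' k, Gfun d q k = Cdq d q := by
  have hfibsum : ∀ w : ℕ, Summable fun k : {k : Fin d → ℤ // mfun k = w} => Gfun d q k.1 :=
    fun w => by haveI := finite_fiber (d := d) w; exact Summable.of_finite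
  have hsum := summable_Gfun (d := d) q hq
  have hsig : Summable fun p : Σ w : ℕ, {k : Fin d → ℤ // mfun k = w} => Gfun d q p.2.1 := by
    have := (Equiv.sigmaFiberEquiv (mfun (d := d))).summable_iff (f := Gfun d q)
    rw [← this] at hsum
    exact hsum
  have h1 : ∑' p : Σ w : ℕ, {k : Fin d → ℤ // mfun k = w}, Gfun d q p.2.1
      = ∑' k, Gfun d q k := (Equiv.sigmaFiberEquiv (mfun (d := d))).tsum_eq (Gfun d q)
  have h2 : ∑' p : Σ w : ℕ, {k : Fin d → ℤ // mfun k = w}, Gfun d q p.2.1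
      = ∑' w : ℕ, ∑' k : {k : Fin d → ℤ // mfun k = w}, Gfun d q k.1 :=
    Summable.tsum_sigma' hfibsum hsig
  have h3 : ∑' k, Gfun d q k = ∑' w : ℕ, Sfun d q w := by
    rw [← h1, h2]
    exact tsum_congr (tsum_fiber q)
  rw [h3, Summable.tsum_eq_zero_add (summable_Sfun q hq), Sfun_zero]
  rw [zero_add, Cdq]
  exact tsum_congr (Sfun_succ q)

end Stmt7Aux

namespace Stmt7Aux

lemma abs_coord_le_pnorm {d : ℕ} {p : ℝ≥0∞} (hp : 1 ≤ p) (x : Fin d → ℝ) (i : Fin d) :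
    |x i| ≤ pnorm d p x := by
  rcases eq_or_ne p ∞ with h | h
  · subst h
    rw [pnorm, PiLp.norm_eq_ciSup]
    have hb := le_ciSup (f := fun j => ‖((WithLp.equiv ⊤ (Fin d → ℝ)).symm x) j‖)
      (Finite.bddAbove_range _) i
    simpa [WithLp.equiv_symm_apply, PiLp.toLp_apply, Real.norm_eq_abs] using hb
  · have hp0 : p ≠ 0 := by
      intro h0
      rw [h0] at hp
      simp at hp
    have hpt : 0 < p.toReal := ENNReal.toReal_pos hp0 h
    rw [pnorm, PiLp.norm_eq_sum hpt]
    simp only [WithLp.equiv_symm_apply, PiLp.toLp_apply, Real.norm_eq_abs]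
    calc |x i| = (|x i| ^ p.toReal) ^ (1 / p.toReal) := by
          rw [← Real.rpow_mul (abs_nonneg _), mul_one_div_cancel hpt.ne', Real.rpow_one]
      _ ≤ (∑ j, |x j| ^ p.toReal) ^ (1 / p.toReal) := by
          apply Real.rpow_le_rpow (by positivity)
            (Finset.single_le_sum (fun j _ => by positivity) (Finset.mem_univ i)) (by positivity)

end Stmt7Aux

open Stmt7Aux

/-- If `|f(x)| ≤ C exp(−β‖x‖_p^q)` and `f̃(x) = ∑_{k ∈ ℤ^d} f(x + 2a k)`,
then for any `a ≥ β^{−1/q}`,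
`∫_{[−a,a]^d} |f − f̃|² ≤ C_{d,q}² C² (2a)^d exp(−2βa^q)`. -/
theorem stmt7 (d : ℕ) (β q : ℝ) (hβ : 0 < β) (hq : 1 ≤ q) (p : ℝ≥0∞) (hp : 1 ≤ p)
    (f : (Fin d → ℝ) → ℝ) (C : ℝ)
    (hf : ∀ x : Fin d → ℝ, |f x| ≤ C * Real.exp (-β * pnorm d p x ^ q))
    (a : ℝ) (ha : β ^ (-1 / q) ≤ a) :
    ∫ x in Set.Icc (fun _ => -a : Fin d → ℝ) (fun _ => a),
        |f x - ∑' k : Fin d → ℤ, f (x + (2 * a) • (fun i => (k i : ℝ)))| ^ 2 ≤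
      Cdq d q ^ 2 * C ^ 2 * (2 * a) ^ d * Real.exp (-2 * β * a ^ q) := by
  classical
  have hq0 : 0 < q := lt_of_lt_of_le zero_lt_one hq
  have ha0 : 0 < a := lt_of_lt_of_le (Real.rpow_pos_of_pos hβ _) ha
  have hC : 0 ≤ C := by
    have h0 := (abs_nonneg (f 0)).trans (hf 0)
    exact (mul_nonneg_iff_of_pos_right (Real.exp_pos _)).mp h0
  have hβa : 1 ≤ β * a ^ q := by
    have h2 : (β ^ ((-1 : ℝ) / q)) ^ q ≤ a ^ q :=
      Real.rpow_le_rpow (Real.rpow_nonneg hβ.le _) ha hq0.le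
    have h3 : (β ^ ((-1 : ℝ) / q)) ^ q = β⁻¹ := by
      rw [← Real.rpow_mul hβ.le, div_mul_cancel₀ _ hq0.ne', Real.rpow_neg_one]
    rw [h3] at h2
    have h4 := mul_le_mul_of_nonneg_left h2 hβ.le
    rwa [mul_inv_cancel₀ hβ.ne'] at h4
  have hCdq : 0 ≤ Cdq d q := by
    rw [← tsum_Gfun (d := d) q hq]
    exact tsum_nonneg (Gfun_nonneg q)
  have hGsum : Summable (Gfun d q) := summable_Gfun q hq
  -- pointwise bound
  have key : ∀ x ∈ Set.Icc (fun _ => -a : Fin d → ℝ) (fun _ => a),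
      |f x - ∑' k : Fin d → ℤ, f (x + (2 * a) • (fun i => (k i : ℝ)))| ≤
        C * Real.exp (-(β * a ^ q)) * Cdq d q := by
    intro x hx
    obtain ⟨hx1, hx2⟩ := hx
    set T : (Fin d → ℤ) → ℝ := fun k => f (x + (2 * a) • (fun i => (k i : ℝ))) with hT
    have hTbound : ∀ k : Fin d → ℤ, k ≠ 0 →
        |T k| ≤ C * Real.exp (-(β * a ^ q)) * Gfun d q k := by
      intro k hk
      have hne : (Finset.univ : Finset (Fin d)).Nonempty := by
        rcases Function.ne_iff.mp hk with ⟨i, _⟩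
        exact ⟨i, Finset.mem_univ i⟩
      obtain ⟨i, -, hi⟩ := Finset.exists_mem_eq_sup Finset.univ hne (fun i => (k i).natAbs)
      have hi' : mfun k = (k i).natAbs := hi
      have hw1 : 1 ≤ mfun k := by
        rcases Nat.eq_zero_or_pos (mfun k) with h0 | h1
        · exact absurd (mfun_eq_zero.mp h0) hk
        · exact h1
      set w : ℝ := (mfun k : ℝ) with hw
      have hw1R : (1 : ℝ) ≤ w := by rw [hw]; exact_mod_cast hw1
      have hki : |(k i : ℝ)| = w := by
        rw [hw, hi', Nat.cast_natAbs, Int.cast_abs]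
      have hcoord : a * (2 * w - 1) ≤ |(x + (2 * a) • (fun i => (k i : ℝ))) i| := by
        have hxi : |x i| ≤ a := abs_le.mpr ⟨hx1 i, hx2 i⟩
        have happ : (x + (2 * a) • (fun i => (k i : ℝ))) i = x i + 2 * a * (k i : ℝ) := by
          simp [Pi.add_apply, Pi.smul_apply, smul_eq_mul]
        rw [happ]
        have habs2 : |2 * a * (k i : ℝ)| = 2 * a * w := by
          rw [abs_mul, hki, abs_of_pos (by positivity)]
        have h5 : |2 * a * (k i : ℝ)| - |(-(x i))| ≤ |2 * a * (k i : ℝ) - -(x i)| :=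
          abs_sub_abs_le_abs_sub _ _
        rw [abs_neg, sub_neg_eq_add] at h5
        have h6 : |2 * a * (k i : ℝ) + x i| = |x i + 2 * a * (k i : ℝ)| := by rw [add_comm]
        rw [h6, habs2] at h5
        linarith
      have hpn : a * (2 * w - 1) ≤ pnorm d p (x + (2 * a) • (fun i => (k i : ℝ))) :=
        le_trans hcoord (abs_coord_le_pnorm hp _ i)
      have hfact : (0 : ℝ) ≤ 2 * w - 1 := by linarith
      have hrp : (a * (2 * w - 1)) ^ q ≤ pnorm d p (x + (2 * a) • (fun i => (k i : ℝ))) ^ q :=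
        Real.rpow_le_rpow (by positivity) hpn hq0.le
      have hmul : (a * (2 * w - 1)) ^ q = a ^ q * (2 * w - 1) ^ q := Real.mul_rpow ha0.le hfact
      have hZ : (1 : ℝ) ≤ (2 * w - 1) ^ q := Real.one_le_rpow (by linarith) hq0.le
      have hexp : -β * pnorm d p (x + (2 * a) • (fun i => (k i : ℝ))) ^ q ≤
          -(β * a ^ q) - ((2 * w - 1) ^ q - 1) := by
        have h7 : β * (a ^ q * (2 * w - 1) ^ q) ≤
            β * pnorm d p (x + (2 * a) • (fun i => (k i : ℝ))) ^ q := by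
          rw [← hmul]
          exact mul_le_mul_of_nonneg_left hrp hβ.le
        nlinarith [mul_nonneg (sub_nonneg.mpr hβa) (sub_nonneg.mpr hZ)]
      calc |T k| ≤ C * Real.exp (-β * pnorm d p (x + (2 * a) • (fun i => (k i : ℝ))) ^ q) :=
            hf _
        _ ≤ C * Real.exp (-(β * a ^ q) - ((2 * w - 1) ^ q - 1)) :=
            mul_le_mul_of_nonneg_left (Real.exp_le_exp.mpr hexp) hC
        _ = C * Real.exp (-(β * a ^ q)) * Gfun d q k := by
            rw [Gfun, if_neg hk, ← hw]
            rw [show -(β * a ^ q) - ((2 * w - 1) ^ q - 1)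
              = -(β * a ^ q) + -((2 * w - 1) ^ q - 1) by ring, Real.exp_add]
            ring
    have hT0sum : Summable (fun k : Fin d → ℤ => if k = 0 then 0 else T k) := by
      apply Summable.of_norm_bounded (hGsum.mul_left (C * Real.exp (-(β * a ^ q))))
      intro k
      rw [Real.norm_eq_abs]
      by_cases hk : k = 0
      · simp [hk, Gfun]
      · rw [if_neg hk]
        exact hTbound k hk
    have hsingle : Summable (fun k : Fin d → ℤ => if k = 0 then T k else 0) :=
      summable_of_ne_finset_zero (s := {0}) (by
        intro k hk
        rw [if_neg (by simpa using hk)])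
    have hTsum : Summable T := by
      have hdecomp : T = (fun k => if k = 0 then T k else 0) + fun k => if k = 0 then 0 else T k := by
        funext k
        by_cases hk : k = 0 <;> simp [hk]
      rw [hdecomp]
      exact hsingle.add hT0sum
    have hsplit : ∑' k, T k = T 0 + ∑' k, (if k = 0 then 0 else T k) :=
      Summable.tsum_eq_add_tsum_ite hTsum 0
    have hzero : (fun i : Fin d => (((0 : Fin d → ℤ) i : ℤ) : ℝ)) = (0 : Fin d → ℝ) := by
      funext i; simp
    have hT0 : T 0 = f x := by
      rw [hT]
      simp only [hzero, smul_zero, add_zero]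
    have heq : f x - ∑' k, T k = -(∑' k, (if k = 0 then 0 else T k)) := by
      rw [hsplit, hT0]; ring
    rw [heq, abs_neg]
    have habs_sum : Summable fun k : Fin d → ℤ => |if k = 0 then 0 else T k| := by
      refine Summable.of_nonneg_of_le (fun k => abs_nonneg _) (fun k => ?_)
        (hGsum.mul_left (C * Real.exp (-(β * a ^ q))))
      by_cases hk : k = 0
      · simp [hk, Gfun]
      · rw [if_neg hk]
        exact hTbound k hk
    calc |∑' k, (if k = 0 then 0 else T k)|
        ≤ ∑' k, |if k = 0 then 0 else T k| := by
          have := norm_tsum_le_tsum_norm (f := fun k : Fin d → ℤ => if k = 0 then 0 else T k)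
            (by simpa [Real.norm_eq_abs] using habs_sum)
          simpa [Real.norm_eq_abs] using this
      _ ≤ ∑' k, C * Real.exp (-(β * a ^ q)) * Gfun d q k := by
          apply Summable.tsum_le_tsum _ habs_sum (hGsum.mul_left _)
          intro k
          by_cases hk : k = 0
          · simp [hk, Gfun]
          · rw [if_neg hk]
            exact hTbound k hk
      _ = C * Real.exp (-(β * a ^ q)) * Cdq d q := by
          rw [tsum_mul_left, tsum_Gfun q hq]
  -- integration
  set s : Set (Fin d → ℝ) := Set.Icc (fun _ => -a) (fun _ => a) with hsdef
  set M : ℝ := C * Real.exp (-(β * a ^ q)) * Cdq d q with hMdef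
  have hM0 : 0 ≤ M := by
    rw [hMdef]
    exact mul_nonneg (mul_nonneg hC (Real.exp_pos _).le) hCdq
  have hsfin : volume s < ∞ := isCompact_Icc.measure_lt_top
  have hvol : (volume s).toReal = (2 * a) ^ d := by
    rw [hsdef, Real.volume_Icc_pi_toReal (fun i => by linarith)]
    rw [Finset.prod_const, Finset.card_univ, Fintype.card_fin]
    ring_nf
  have hInt : ∫ x in s,
      |f x - ∑' k : Fin d → ℤ, f (x + (2 * a) • (fun i => (k i : ℝ)))| ^ 2 ≤
      M ^ 2 * (volume s).toReal := by
    have hb := norm_setIntegral_le_of_norm_le_const_ae' (C := M ^ 2) (μ := volume) hsfin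
      (f := fun x => |f x - ∑' k : Fin d → ℤ, f (x + (2 * a) • (fun i => (k i : ℝ)))| ^ 2)
      (ae_of_all _ (fun x hx => by
        rw [Real.norm_eq_abs, abs_of_nonneg (by positivity)]
        exact pow_le_pow_left₀ (abs_nonneg _) (key x hx) 2))
    calc ∫ x in s, |f x - ∑' k : Fin d → ℤ, f (x + (2 * a) • (fun i => (k i : ℝ)))| ^ 2
        ≤ ‖∫ x in s, |f x - ∑' k : Fin d → ℤ, f (x + (2 * a) • (fun i => (k i : ℝ)))| ^ 2‖ := by
          rw [Real.norm_eq_abs]; exact le_abs_self _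
      _ ≤ M ^ 2 * (volume s).toReal := hb
  calc ∫ x in s, |f x - ∑' k : Fin d → ℤ, f (x + (2 * a) • (fun i => (k i : ℝ)))| ^ 2
      ≤ M ^ 2 * (volume s).toReal := hInt
    _ = Cdq d q ^ 2 * C ^ 2 * (2 * a) ^ d * Real.exp (-2 * β * a ^ q) := by
        rw [hvol, hMdef]
        have hexp2 : Real.exp (-(β * a ^ q)) ^ 2 = Real.exp (-2 * β * a ^ q) := by
          rw [sq, ← Real.exp_add]; ring_nf
        calc (C * Real.exp (-(β * a ^ q)) * Cdq d q) ^ 2 * (2 * a) ^ d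
            = Cdq d q ^ 2 * C ^ 2 * (2 * a) ^ d * Real.exp (-(β * a ^ q)) ^ 2 := by ring
          _ = _ := by rw [hexp2]
end

section
/- Let h : ℝ^d → ℝ satisfy ‖h‖_{0,β,p,q} = sup_x |exp(β‖x‖_p^q) h(x)| < ∞ for some β > 0, 1 ≤ p ≤ ∞, 1 ≤ q < ∞. Then for any a ≥ β^{−1/q}, |∫_{ℝ^d ∖ [−a,a]^d} h(x) dx| ≤ (2^d d / (β^{d/q} q)) · ⌈d/q⌉! · ‖h‖_{0,β,p,q} · (βa^q)^{d/q − 1} · exp(−βa^q). -/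
open scoped ENNReal
open MeasureTheory Set Filter Real

section auxiliary
variable {β q : ℝ}

lemma tendsto_E (hβ : 0 < β) (hq : 1 ≤ q) :
    Tendsto (fun v : ℝ => Real.exp (-(β * v ^ q))) atTop (nhds 0) := by
  apply Real.tendsto_exp_atBot.comp
  apply Filter.tendsto_neg_atBot_iff.mpr
  exact (tendsto_rpow_atTop (by linarith)).const_mul_atTop hβ

lemma tendsto_aux (hβ : 0 < β) (hq : 1 ≤ q) (s : ℝ) :
    Tendsto (fun v : ℝ => v ^ s * Real.exp (-(β * v ^ q))) atTop (nhds 0) := by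
  apply squeeze_zero' (g := fun v : ℝ => v ^ s * Real.exp (-β * v))
  · filter_upwards [Filter.eventually_ge_atTop (1:ℝ)] with v hv
    positivity
  · filter_upwards [Filter.eventually_ge_atTop (1:ℝ)] with v hv
    have h1 : v ≤ v ^ q := by
      calc v = v ^ (1:ℝ) := (Real.rpow_one v).symm
      _ ≤ v ^ q := Real.rpow_le_rpow_of_exponent_le hv hq
    have h2 : -(β * v ^ q) ≤ -β * v := by nlinarith
    exact mul_le_mul_of_nonneg_left (Real.exp_le_exp.2 h2)
      (Real.rpow_nonneg (by linarith) s)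
  · exact tendsto_rpow_mul_exp_neg_mul_atTop_nhds_zero s β hβ

lemma hasDerivAt_negE (hβ : 0 < β) (hq : 1 ≤ q) {u : ℝ} (hu : 0 < u) :
    HasDerivAt (fun v : ℝ => -Real.exp (-(β * v ^ q)))
      (β * q * u ^ (q - 1) * Real.exp (-(β * u ^ q))) u := by
  have h1 : HasDerivAt (fun v : ℝ => v ^ q) (q * u ^ (q - 1)) u :=
    Real.hasDerivAt_rpow_const (Or.inl hu.ne')
  have h3 := (((h1.const_mul β).neg).exp).neg
  refine h3.congr_deriv ?_
  simp only [Pi.neg_apply]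
  ring

lemma integrable_w (hβ : 0 < β) (hq : 1 ≤ q) {b : ℝ} (hb : 0 < b) :
    IntegrableOn (fun u : ℝ => β * q * u ^ (q - 1) * Real.exp (-(β * u ^ q)))
      (Ioi b) := by
  refine integrableOn_Ioi_deriv_of_nonneg' (l := 0)
    (fun x hx => hasDerivAt_negE hβ hq (lt_of_lt_of_le hb hx))
    (fun x hx => by
      have hx0 : (0:ℝ) < x := hb.trans hx
      have : (0:ℝ) ≤ x ^ (q-1) := Real.rpow_nonneg hx0.le _
      positivity) ?_
  simpa using (tendsto_E hβ hq).neg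

lemma integral_w (hβ : 0 < β) (hq : 1 ≤ q) {b : ℝ} (hb : 0 < b) :
    ∫ u in Ioi b, β * q * u ^ (q - 1) * Real.exp (-(β * u ^ q)) =
      Real.exp (-(β * b ^ q)) := by
  have := integral_Ioi_of_hasDerivAt_of_nonneg' (l := 0)
    (fun x hx => hasDerivAt_negE hβ hq (lt_of_lt_of_le hb hx))
    (fun x hx => by
      have hx0 : (0:ℝ) < x := hb.trans hx
      have : (0:ℝ) ≤ x ^ (q-1) := Real.rpow_nonneg hx0.le _
      positivity)
    (by simpa using (tendsto_E hβ hq).neg)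
  simpa using this

lemma lintegral_w (hβ : 0 < β) (hq : 1 ≤ q) {b : ℝ} (hb : 0 < b) :
    ∫⁻ u in Ioi b, ENNReal.ofReal (β * q * u ^ (q - 1) * Real.exp (-(β * u ^ q))) =
      ENNReal.ofReal (Real.exp (-(β * b ^ q))) := by
  rw [← integral_w hβ hq hb, ofReal_integral_eq_lintegral_ofReal (integrable_w hβ hq hb)]
  filter_upwards [ae_restrict_mem measurableSet_Ioi] with x hx
  have hx0 : (0:ℝ) < x := hb.trans hx
  have : (0:ℝ) ≤ x ^ (q-1) := Real.rpow_nonneg hx0.le _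
  positivity


lemma integ_c (hβ : 0 < β) (hq : 1 ≤ q) (c : ℝ) {a : ℝ} (ha : 0 < a) :
    IntegrableOn (fun v : ℝ => v ^ c * Real.exp (-(β * v ^ q))) (Ioi a) := by
  have base : ∀ s : ℝ, -1 < s →
      IntegrableOn (fun v : ℝ => v ^ s * Real.exp (-(β * v ^ q))) (Ioi a) := by
    intro s hs
    have := (integrableOn_rpow_mul_exp_neg_mul_rpow (p := q) hs (by linarith) hβ).mono_set
      (Ioi_subset_Ioi ha.le)
    simpa [neg_mul] using this
  rcases le_or_gt 0 c with hc | hc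
  · exact base c (by linarith)
  · -- c < 0 : dominate by a^c * exp
    have hcont : ContinuousOn (fun v : ℝ => v ^ c * Real.exp (-(β * v ^ q))) (Ioi a) := by
      apply ContinuousOn.mul
      · exact fun x hx => (Real.continuousAt_rpow_const x c
          (Or.inl (ne_of_gt (ha.trans hx)))).continuousWithinAt
      · apply Continuous.continuousOn
        apply Real.continuous_exp.comp
        apply Continuous.neg
        apply continuous_const.mul
        exact Real.continuous_rpow_const (by linarith)
    refine Integrable.mono' (((base 0 (by norm_num)).const_mul (a ^ c)))
      (hcont.aestronglyMeasurable measurableSet_Ioi) ?_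
    filter_upwards [ae_restrict_mem measurableSet_Ioi] with x hx
    have hx0 : (0:ℝ) < x := ha.trans hx
    have h1 : x ^ c ≤ a ^ c :=
      Real.rpow_le_rpow_of_nonpos ha (le_of_lt hx) hc.le
    have h2 : (0:ℝ) < Real.exp (-(β * x ^ q)) := Real.exp_pos _
    rw [Real.norm_eq_abs, abs_of_nonneg (by positivity)]
    have : x ^ (0:ℝ) = 1 := Real.rpow_zero x
    rw [this]
    nlinarith [Real.rpow_nonneg hx0.le c]



lemma integral_w0 (hβ : 0 < β) (hq : 1 ≤ q) {b : ℝ} (hb : 0 < b) :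
    ∫ u in Ioi b, u ^ (q - 1) * Real.exp (-(β * u ^ q)) =
      Real.exp (-(β * b ^ q)) / (β * q) := by
  have h := integral_w hβ hq hb
  simp_rw [mul_assoc] at h
  rw [integral_const_mul, integral_const_mul] at h
  have hbq : β * q ≠ 0 := by positivity
  field_simp [eq_div_iff hbq]
  linarith [h]

lemma Hbase (hβ : 0 < β) (hq : 1 ≤ q) {c : ℝ} (hc : c + 1 ≤ q) {a : ℝ}
    (ha : 0 < a) :
    ∫ v in Ioi a, v ^ c * Real.exp (-(β * v ^ q)) ≤
      1 / (β * q) * (a ^ (c + 1 - q) * Real.exp (-(β * a ^ q))) := by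
  have key : ∫ v in Ioi a, v ^ c * Real.exp (-(β * v ^ q)) ≤
      ∫ v in Ioi a, a ^ (c + 1 - q) * (v ^ (q - 1) * Real.exp (-(β * v ^ q))) := by
    apply setIntegral_mono_on (integ_c hβ hq c ha)
      ((integ_c hβ hq (q-1) ha).const_mul _) measurableSet_Ioi
    intro v hv
    have hv0 : (0:ℝ) < v := ha.trans hv
    have e1 : v ^ c = v ^ (c + 1 - q) * v ^ (q - 1) := by
      rw [← Real.rpow_add hv0]; ring_nf
    have e2 : v ^ (c + 1 - q) ≤ a ^ (c + 1 - q) :=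
      Real.rpow_le_rpow_of_nonpos ha (le_of_lt hv) (by linarith)
    rw [e1]
    have h3 : (0:ℝ) ≤ v ^ (q - 1) * Real.exp (-(β * v ^ q)) := by
      have := Real.rpow_nonneg hv0.le (q-1); positivity
    calc v ^ (c + 1 - q) * v ^ (q - 1) * Real.exp (-(β * v ^ q))
        = v ^ (c + 1 - q) * (v ^ (q - 1) * Real.exp (-(β * v ^ q))) := by ring
      _ ≤ a ^ (c + 1 - q) * (v ^ (q - 1) * Real.exp (-(β * v ^ q))) :=
          mul_le_mul_of_nonneg_right e2 h3
  rw [integral_const_mul, integral_w0 hβ hq ha] at key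
  calc _ ≤ _ := key
    _ = 1 / (β * q) * (a ^ (c + 1 - q) * Real.exp (-(β * a ^ q))) := by ring

lemma Hbound (hβ : 0 < β) (hq : 1 ≤ q) (n : ℕ) (c : ℝ) (hcn : (c + 1) / q ≤ n)
    {a : ℝ} (ha : 0 < a) (hz : 1 ≤ β * a ^ q) :
    ∫ v in Ioi a, v ^ c * Real.exp (-(β * v ^ q)) ≤
      (n.factorial : ℝ) / (β * q) * (a ^ (c + 1 - q) * Real.exp (-(β * a ^ q))) := by
  have hq0 : (0:ℝ) < q := by linarith
  have hA : (0:ℝ) ≤ a ^ (c + 1 - q) * Real.exp (-(β * a ^ q)) := by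
    have := Real.rpow_nonneg ha.le (c+1-q); positivity
  induction n generalizing c with
  | zero =>
    have hc : c + 1 ≤ q := by
      have h0 : c + 1 ≤ 0 := by
        have := (div_le_iff₀ hq0).1 hcn; simpa using this
      linarith
    simpa using Hbase hβ hq hc ha
  | succ n ih =>
    by_cases hc : c + 1 ≤ q
    · calc _ ≤ _ := Hbase hβ hq hc ha
        _ ≤ _ := by
          apply mul_le_mul_of_nonneg_right _ hA
          apply (div_le_div_iff_of_pos_right (by positivity)).2
          exact_mod_cast Nat.one_le_iff_ne_zero.2 (Nat.factorial_ne_zero _)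
    · push_neg at hc
      set E : ℝ → ℝ := fun v => Real.exp (-(β * v ^ q)) with hEdef
      -- integration by parts
      have hderiv : ∀ u ∈ Ici a, HasDerivAt
          (fun v : ℝ => -(1 / (β * q)) * (v ^ (c + 1 - q) * E v))
          (u ^ c * E u - (c + 1 - q) / (β * q) * (u ^ (c - q) * E u)) u := by
        intro u hu
        have hu0 : (0:ℝ) < u := lt_of_lt_of_le ha hu
        have h1 : HasDerivAt (fun v : ℝ => v ^ (c + 1 - q))
            ((c + 1 - q) * u ^ (c + 1 - q - 1)) u :=
          Real.hasDerivAt_rpow_const (Or.inl hu0.ne')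
        have h2 : HasDerivAt E (E u * -(β * (q * u ^ (q - 1)))) u := by
          have hq1 : HasDerivAt (fun v : ℝ => v ^ q) (q * u ^ (q - 1)) u :=
            Real.hasDerivAt_rpow_const (Or.inl hu0.ne')
          exact ((hq1.const_mul β).neg).exp
        have h3 := HasDerivAt.const_mul (-(1 / (β * q))) (h1.mul h2)
        refine h3.congr_deriv ?_
        rw [show c + 1 - q - 1 = c - q from by ring]
        have e1 : u ^ (c + 1 - q) * u ^ (q - 1) = u ^ c := by
          rw [← Real.rpow_add hu0]; ring_nf
        rw [← e1]
        have hbq : (β * q) ≠ 0 := by positivity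
        field_simp
        ring
      have f'int : IntegrableOn
          (fun u : ℝ => u ^ c * E u - (c + 1 - q) / (β * q) * (u ^ (c - q) * E u))
          (Ioi a) :=
        (integ_c hβ hq c ha).sub ((integ_c hβ hq (c - q) ha).const_mul _)
      have htends : Tendsto (fun v : ℝ => -(1 / (β * q)) * (v ^ (c + 1 - q) * E v))
          atTop (nhds 0) := by
        simpa using (tendsto_aux hβ hq (c + 1 - q)).const_mul (-(1 / (β * q)))
      have parts := integral_Ioi_of_hasDerivAt_of_tendsto' hderiv f'int htends
      have hsub : ∫ u in Ioi a, u ^ c * E u =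
          1 / (β * q) * (a ^ (c + 1 - q) * E a) +
            (c + 1 - q) / (β * q) * ∫ u in Ioi a, u ^ (c - q) * E u := by
        rw [integral_sub (integ_c hβ hq c ha)
          ((integ_c hβ hq (c - q) ha).const_mul _), integral_const_mul] at parts
        have : (0:ℝ) - -(1 / (β * q)) * (a ^ (c + 1 - q) * E a) =
            1 / (β * q) * (a ^ (c + 1 - q) * E a) := by ring
        rw [this] at parts
        linarith [parts]
      have hIH : ∫ u in Ioi a, u ^ (c - q) * E u ≤
          (n.factorial : ℝ) / (β * q) * (a ^ (c - q + 1 - q) * E a) := by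
        apply ih
        · rw [div_le_iff₀ hq0] at hcn ⊢
          push_cast at hcn ⊢
          linarith
        · have := Real.rpow_nonneg ha.le (c - q + 1 - q); positivity
      -- bound a^(c-q+1-q) by β * a^(c+1-q)
      have ht : (0:ℝ) < a ^ q := Real.rpow_pos_of_pos ha q
      have h5 : (a ^ q)⁻¹ ≤ β := by
        rw [← one_div, div_le_iff₀ ht]; linarith
      have e6 : a ^ (c - q + 1 - q) = a ^ (c + 1 - q) * (a ^ q)⁻¹ := by
        rw [show c - q + 1 - q = (c + 1 - q) + (-q) from by ring,
          Real.rpow_add ha, Real.rpow_neg ha.le]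
      have hexpA : (0:ℝ) ≤ a ^ (c + 1 - q) := Real.rpow_nonneg ha.le _
      have hEa : (0:ℝ) < E a := Real.exp_pos _
      have h7 : a ^ (c - q + 1 - q) * E a ≤ β * (a ^ (c + 1 - q) * E a) := by
        rw [e6]
        have : a ^ (c + 1 - q) * (a ^ q)⁻¹ ≤ a ^ (c + 1 - q) * β :=
          mul_le_mul_of_nonneg_left h5 hexpA
        nlinarith
      have hfn : (1:ℝ) ≤ (n.factorial : ℝ) := by
        exact_mod_cast Nat.one_le_iff_ne_zero.2 (Nat.factorial_ne_zero _)
      have hc2 : c + 1 - q ≤ n * q := by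
        rw [div_le_iff₀ hq0] at hcn
        push_cast at hcn
        linarith
      -- final assembly
      have step : (c + 1 - q) / (β * q) * ∫ u in Ioi a, u ^ (c - q) * E u ≤
          (n : ℝ) * (n.factorial : ℝ) / (β * q) * (a ^ (c + 1 - q) * E a) := by
        have hcoef : (0:ℝ) ≤ (c + 1 - q) / (β * q) := div_nonneg (by linarith) (by positivity)
        calc (c + 1 - q) / (β * q) * ∫ u in Ioi a, u ^ (c - q) * E u
            ≤ (c + 1 - q) / (β * q) *
              ((n.factorial : ℝ) / (β * q) * (a ^ (c - q + 1 - q) * E a)) := by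
              apply mul_le_mul_of_nonneg_left hIH hcoef
          _ ≤ (c + 1 - q) / (β * q) *
              ((n.factorial : ℝ) / (β * q) * (β * (a ^ (c + 1 - q) * E a))) := by
              apply mul_le_mul_of_nonneg_left _ hcoef
              apply mul_le_mul_of_nonneg_left h7 (by positivity)
          _ = (c + 1 - q) * (n.factorial : ℝ) / (β * q * q) *
              (a ^ (c + 1 - q) * E a) := by
              field_simp
          _ ≤ (n : ℝ) * q * (n.factorial : ℝ) / (β * q * q) *
              (a ^ (c + 1 - q) * E a) := by
              have hA' : (0:ℝ) ≤ a ^ (c + 1 - q) * E a := by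
                simp only [hEdef]; exact hA
              apply mul_le_mul_of_nonneg_right _ hA'
              apply (div_le_div_iff_of_pos_right (by positivity)).2
              exact mul_le_mul_of_nonneg_right hc2 (by linarith)
          _ = (n : ℝ) * (n.factorial : ℝ) / (β * q) * (a ^ (c + 1 - q) * E a) := by
              field_simp
      rw [hsub]
      set A := a ^ (c + 1 - q) * E a with hAdef
      have hA' : (0:ℝ) ≤ A := by rw [hAdef]; simp only [hEdef]; exact hA
      have hfact : ((n + 1).factorial : ℝ) = ((n : ℝ) + 1) * (n.factorial : ℝ) := by
        push_cast [Nat.factorial_succ]; ring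
      have hco : (1 + (n:ℝ) * (n.factorial : ℝ)) ≤ ((n + 1).factorial : ℝ) := by
        rw [hfact]; nlinarith [hfn]
      have last : (1 + (n:ℝ) * (n.factorial : ℝ)) / (β * q) * A ≤
          ((n + 1).factorial : ℝ) / (β * q) * A :=
        mul_le_mul_of_nonneg_right ((div_le_div_iff_of_pos_right (by positivity)).2 hco) hA'
      calc 1 / (β * q) * A + (c + 1 - q) / (β * q) * ∫ u in Ioi a, u ^ (c - q) * E u
          ≤ 1 / (β * q) * A + (n:ℝ) * (n.factorial : ℝ) / (β * q) * A := by
            linarith [step]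
        _ = (1 + (n:ℝ) * (n.factorial : ℝ)) / (β * q) * A := by ring
        _ ≤ ((n + 1).factorial : ℝ) / (β * q) * A := last

lemma integ_pow (hβ : 0 < β) (hq : 1 ≤ q) (k : ℕ) {a : ℝ} (ha : 0 < a) :
    IntegrableOn (fun v : ℝ => v ^ k * Real.exp (-(β * v ^ q))) (Ioi a) := by
  have := integ_c hβ hq (k : ℝ) ha
  simpa [Real.rpow_natCast] using this

lemma Kint (hβ : 0 < β) (hq : 1 ≤ q) {a : ℝ} (ha : 0 < a) (d : ℕ) :
    IntegrableOn (fun u : ℝ =>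
      β * q * u ^ (q - 1) * Real.exp (-(β * u ^ q)) * ((2*u) ^ d - (2*a) ^ d))
      (Ioi a) := by
  apply IntegrableOn.congr_fun
    (f := fun u : ℝ => (β * q * 2 ^ d) * (u ^ (q - 1 + (d:ℝ)) * Real.exp (-(β * u ^ q)))
      - (β * q * (2*a) ^ d) * (u ^ (q - 1) * Real.exp (-(β * u ^ q))))
    (((integ_c hβ hq (q - 1 + (d:ℝ)) ha).const_mul _).sub
      ((integ_c hβ hq (q - 1) ha).const_mul _)) ?_ measurableSet_Ioi
  intro u hu
  have hu0 : (0:ℝ) < u := ha.trans hu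
  have e1 : u ^ (q - 1 + (d:ℝ)) = u ^ (q - 1) * u ^ d := by
    rw [Real.rpow_add hu0, Real.rpow_natCast]
  simp only []
  rw [e1, mul_pow]
  ring

lemma Kval (hβ : 0 < β) (hq : 1 ≤ q) {a : ℝ} (ha : 0 < a) {d : ℕ} (hd : 1 ≤ d) :
    ∫ u in Ioi a, β * q * u ^ (q - 1) * Real.exp (-(β * u ^ q)) *
        ((2*u) ^ d - (2*a) ^ d) =
      2 ^ d * (d : ℝ) * ∫ u in Ioi a, u ^ ((d:ℝ) - 1) * Real.exp (-(β * u ^ q)) := by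
  set E : ℝ → ℝ := fun v => Real.exp (-(β * v ^ q)) with hEdef
  have hd' : d - 1 + 1 = d := Nat.succ_pred_eq_of_pos hd
  have hderiv : ∀ u ∈ Ici a, HasDerivAt
      (fun u : ℝ => -(((2*u) ^ d - (2*a) ^ d) * E u))
      (β * q * u ^ (q - 1) * E u * ((2*u) ^ d - (2*a) ^ d)
        - 2 ^ d * (d:ℝ) * (u ^ (d - 1) * E u)) u := by
    intro u hu
    have hu0 : (0:ℝ) < u := lt_of_lt_of_le ha hu
    have hlin : HasDerivAt (fun u : ℝ => 2 * u) 2 u := by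
      simpa using (hasDerivAt_id u).const_mul (2:ℝ)
    have hpow : HasDerivAt (fun u : ℝ => (2*u) ^ d) ((d:ℝ) * (2*u) ^ (d - 1) * 2) u :=
      (hasDerivAt_pow d (2*u)).comp u hlin
    have hE : HasDerivAt E (E u * -(β * (q * u ^ (q - 1)))) u := by
      have hq1 : HasDerivAt (fun v : ℝ => v ^ q) (q * u ^ (q - 1)) u :=
        Real.hasDerivAt_rpow_const (Or.inl hu0.ne')
      exact ((hq1.const_mul β).neg).exp
    have h3 := ((hpow.sub_const ((2*a) ^ d)).mul hE).neg
    refine h3.congr_deriv ?_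
    have e2 : ((2:ℝ)*u) ^ (d - 1) * 2 = 2 ^ d * u ^ (d - 1) := by
      rw [mul_pow, mul_assoc, mul_comm ((u:ℝ) ^ (d-1)) 2, ← mul_assoc, ← pow_succ, hd']
    have e3 : ((2:ℝ)*u) ^ (d-1) = (2^d * u ^ (d-1)) / 2 := by
      field_simp; linarith [e2]
    rw [e3]
    field_simp
    ring
  have htends : Tendsto (fun u : ℝ => -(((2*u) ^ d - (2*a) ^ d) * E u)) atTop
      (nhds 0) := by
    have t1 : Tendsto (fun v : ℝ => v ^ d * E v) atTop (nhds 0) := by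
      have := tendsto_aux hβ hq (d : ℝ)
      simpa [Real.rpow_natCast] using this
    have t2 := tendsto_E hβ hq
    have t3 := ((t1.const_mul ((2:ℝ) ^ d)).neg).add (t2.const_mul ((2*a) ^ d))
    have : -((2:ℝ) ^ d * 0) + (2*a) ^ d * 0 = 0 := by ring
    rw [this] at t3
    apply t3.congr
    intro u
    rw [mul_pow]
    ring
  have G'int : IntegrableOn (fun u : ℝ =>
      β * q * u ^ (q - 1) * E u * ((2*u) ^ d - (2*a) ^ d)
        - 2 ^ d * (d:ℝ) * (u ^ (d - 1) * E u)) (Ioi a) :=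
    (Kint hβ hq ha d).sub ((integ_pow hβ hq (d-1) ha).const_mul _)
  have parts := integral_Ioi_of_hasDerivAt_of_tendsto' hderiv G'int htends
  rw [integral_sub (Kint hβ hq ha d) ((integ_pow hβ hq (d-1) ha).const_mul _),
    integral_const_mul] at parts
  have hGa : (0:ℝ) - -((((2*a) ^ d - (2*a) ^ d) * E a)) = 0 := by ring
  rw [hGa] at parts
  have hcast : ∫ u in Ioi a, u ^ ((d:ℝ) - 1) * E u =
      ∫ u in Ioi a, u ^ (d - 1 : ℕ) * E u := by
    congr 1
    funext u
    congr 1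
    rw [← Real.rpow_natCast u (d-1)]
    congr 1
    push_cast [Nat.cast_sub hd]
    ring
  rw [hcast]
  linarith [parts]


lemma lint_main (hβ : 0 < β) (hq : 1 ≤ q) {a : ℝ} (ha : 0 < a) (d : ℕ) :
    ∫⁻ x in (Metric.closedBall (0 : Fin d → ℝ) a)ᶜ,
        ENNReal.ofReal (Real.exp (-(β * ‖x‖ ^ q))) =
      ENNReal.ofReal (∫ u in Ioi a,
        β * q * u ^ (q - 1) * Real.exp (-(β * u ^ q)) * ((2*u) ^ d - (2*a) ^ d)) := by
  set W : Set (Fin d → ℝ) := (Metric.closedBall (0 : Fin d → ℝ) a)ᶜ with hWdef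
  set φr : ℝ → ℝ := fun u => β * q * u ^ (q - 1) * Real.exp (-(β * u ^ q)) with hφdef
  set F : (Fin d → ℝ) × ℝ → ℝ≥0∞ :=
    fun z => Set.indicator {z : (Fin d → ℝ) × ℝ | ‖z.1‖ < z.2}
      (fun z => ENNReal.ofReal (φr z.2)) z with hFdef
  have hq1 : (0:ℝ) ≤ q - 1 := by linarith
  have hφm : Measurable fun u : ℝ => ENNReal.ofReal (φr u) := by
    apply Measurable.ennreal_ofReal
    apply Measurable.mul
    · exact measurable_const.mul (Real.continuous_rpow_const hq1).measurable
    · exact ((measurable_const.mul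
        (Real.continuous_rpow_const (by linarith)).measurable).neg).exp
  have hsetm : MeasurableSet {z : (Fin d → ℝ) × ℝ | ‖z.1‖ < z.2} :=
    (isOpen_lt (continuous_fst.norm) continuous_snd).measurableSet
  have hFm : Measurable F := (hφm.comp measurable_snd).indicator hsetm
  have hWm : MeasurableSet W := measurableSet_closedBall.compl
  -- step 1: pointwise identity on W
  have step1 : ∀ x : Fin d → ℝ, a < ‖x‖ →
      ∫⁻ u, F (x, u) = ENNReal.ofReal (Real.exp (-(β * ‖x‖ ^ q))) := by
    intro x hx
    have hrw : (fun u => F (x, u)) =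
        (Ioi ‖x‖).indicator fun u => ENNReal.ofReal (φr u) := by
      funext u
      simp only [hFdef, Set.indicator, Set.mem_setOf_eq, Set.mem_Ioi]
    rw [hrw, lintegral_indicator measurableSet_Ioi]
    exact lintegral_w hβ hq (ha.trans hx)
  have eq1 : ∫⁻ x in W, ENNReal.ofReal (Real.exp (-(β * ‖x‖ ^ q))) =
      ∫⁻ x in W, ∫⁻ u, F (x, u) := by
    apply setLIntegral_congr_fun hWm
    intro x hx
    have hx' : a < ‖x‖ := by
      simpa [hWdef, Metric.mem_closedBall, dist_zero_right] using hx
    exact (step1 x hx').symm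
  -- swap
  have eq2 : ∫⁻ x in W, ∫⁻ u, F (x, u) = ∫⁻ u, ∫⁻ x in W, F (x, u) :=
    lintegral_lintegral_swap hFm.aemeasurable
  -- inner integral
  have inner : ∀ u : ℝ, ∫⁻ x in W, F (x, u) =
      ENNReal.ofReal (φr u) * volume (Metric.ball (0 : Fin d → ℝ) u ∩ W) := by
    intro u
    have hrw : (fun x : Fin d → ℝ => F (x, u)) =
        (Metric.ball (0 : Fin d → ℝ) u).indicator
          fun _ => ENNReal.ofReal (φr u) := by
      funext x
      simp only [hFdef, Set.indicator, Set.mem_setOf_eq, mem_ball_zero_iff]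
    rw [hrw, lintegral_indicator_const Metric.isOpen_ball.measurableSet,
      Measure.restrict_apply' hWm]
  -- volume computation
  have hvol : ∀ u : ℝ, volume (Metric.ball (0 : Fin d → ℝ) u ∩ W) =
      (Ioi a).indicator
        (fun u => ENNReal.ofReal ((2*u) ^ d - (2*a) ^ d)) u := by
    intro u
    by_cases hu : a < u
    · rw [Set.indicator_of_mem (by exact hu : u ∈ Ioi a)]
      have hd : Metric.ball (0 : Fin d → ℝ) u ∩ W =
          Metric.ball (0 : Fin d → ℝ) u \ Metric.closedBall 0 a := by
        rw [hWdef, Set.diff_eq]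
      rw [hd, measure_diff (Metric.closedBall_subset_ball hu)
        measurableSet_closedBall.nullMeasurableSet
        (measure_closedBall_lt_top).ne,
        Real.volume_pi_ball _ (ha.trans hu), Real.volume_pi_closedBall _ ha.le,
        ← ENNReal.ofReal_sub _ (by positivity)]
      congr 1
      simp [Fintype.card_fin]
    · rw [Set.indicator_of_notMem (by simpa using hu)]
      have : Metric.ball (0 : Fin d → ℝ) u ∩ W = ∅ := by
        apply Set.eq_empty_iff_forall_notMem.2
        intro x hx
        rcases hx with ⟨hx1, hx2⟩
        rw [mem_ball_zero_iff] at hx1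
        apply hx2
        rw [Metric.mem_closedBall, dist_zero_right]
        push_neg at hu
        linarith
      rw [this]
      simp
  -- assemble
  have eq3 : ∫⁻ u, ∫⁻ x in W, F (x, u) =
      ∫⁻ u, (Ioi a).indicator
        (fun u => ENNReal.ofReal (φr u * ((2*u) ^ d - (2*a) ^ d))) u := by
    apply lintegral_congr
    intro u
    rw [inner u, hvol u]
    by_cases hu : u ∈ Ioi a
    · rw [Set.indicator_of_mem hu, Set.indicator_of_mem hu,
        ← ENNReal.ofReal_mul]
      have hu0 : (0:ℝ) < u := ha.trans hu
      have := Real.rpow_nonneg hu0.le (q - 1)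
      positivity
    · rw [Set.indicator_of_notMem hu, Set.indicator_of_notMem hu, mul_zero]
  have eq4 : ∫⁻ u, (Ioi a).indicator
        (fun u => ENNReal.ofReal (φr u * ((2*u) ^ d - (2*a) ^ d))) u =
      ENNReal.ofReal (∫ u in Ioi a, φr u * ((2*u) ^ d - (2*a) ^ d)) := by
    rw [lintegral_indicator measurableSet_Ioi]
    rw [ofReal_integral_eq_lintegral_ofReal (Kint hβ hq ha d)]
    apply (ae_restrict_iff' measurableSet_Ioi).2
    apply ae_of_all
    intro u hu
    have hau : a < u := hu
    have hu0 : (0:ℝ) < u := ha.trans hau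
    have h1 : (0:ℝ) ≤ u ^ (q - 1) := Real.rpow_nonneg hu0.le _
    have h2 : (0:ℝ) ≤ (2*u) ^ d - (2*a) ^ d := by
      have : (2*a) ^ d ≤ (2*u) ^ d := by
        apply pow_le_pow_left₀ (by linarith) (by linarith)
      linarith
    have h3 : (0:ℝ) ≤ φr u := by rw [hφdef]; positivity
    positivity
  rw [eq1, eq2, eq3, eq4]


end auxiliary

lemma norm_le_pnorm (d : ℕ) (p : ℝ≥0∞) (hp : 1 ≤ p) (x : Fin d → ℝ) :
    ‖x‖ ≤ pnorm d p x := by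
  have : Fact (1 ≤ p) := ⟨hp⟩
  rw [show pnorm d p x = ‖(WithLp.equiv p (Fin d → ℝ)).symm x‖ from rfl,
    pi_norm_le_iff_of_nonneg (norm_nonneg ((WithLp.equiv p (Fin d → ℝ)).symm x))]
  intro i
  set y := (WithLp.equiv p (Fin d → ℝ)).symm x with hy
  have hyi : y i = x i := rfl
  rw [← hyi]
  by_cases hptop : p = ⊤
  · subst hptop
    rw [PiLp.norm_eq_ciSup]
    exact le_ciSup (f := fun j => ‖y j‖) (Finite.bddAbove_range _) i
  · have hp0 : p ≠ 0 := by
      intro h0; rw [h0] at hp; simp at hp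
    have hpt : 0 < p.toReal := ENNReal.toReal_pos hp0 hptop
    rw [PiLp.norm_eq_sum hpt]
    have h1 : ‖y i‖ ^ p.toReal ≤ ∑ j, ‖y j‖ ^ p.toReal :=
      Finset.single_le_sum (f := fun j => ‖y j‖ ^ p.toReal)
        (fun j _ => Real.rpow_nonneg (norm_nonneg _) _) (Finset.mem_univ i)
    calc ‖y i‖ = (‖y i‖ ^ p.toReal) ^ (1 / p.toReal) := by
          rw [one_div, Real.rpow_rpow_inv (norm_nonneg _) hpt.ne']
      _ ≤ (∑ j, ‖y j‖ ^ p.toReal) ^ (1 / p.toReal) := by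
          apply Real.rpow_le_rpow (Real.rpow_nonneg (norm_nonneg _) _) h1
          positivity

/-- If `sup_x |exp(β‖x‖_p^q) h(x)| ≤ Cn < ∞` for some `β > 0`,
`1 ≤ p ≤ ∞`, `1 ≤ q < ∞`, then for any `a ≥ β^{−1/q}`,
`|∫_{ℝ^d ∖ [−a,a]^d} h| ≤ (2^d d/(β^{d/q} q)) ⌈d/q⌉! Cn (βa^q)^{d/q−1} e^{−βa^q}`. -/
theorem stmt11 (d : ℕ) (β q : ℝ) (hβ : 0 < β) (hq : 1 ≤ q) (p : ℝ≥0∞) (hp : 1 ≤ p)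
    (h : (Fin d → ℝ) → ℝ) (Cn : ℝ)
    (hCn : ∀ x : Fin d → ℝ, |Real.exp (β * pnorm d p x ^ q) * h x| ≤ Cn)
    (a : ℝ) (ha : β ^ (-1 / q) ≤ a) :
    |∫ x in (Set.Icc (fun _ => -a : Fin d → ℝ) (fun _ => a))ᶜ, h x| ≤
      2 ^ d * d / (β ^ ((d : ℝ) / q) * q) * (Nat.ceil ((d : ℝ) / q)).factorial * Cn *
        (β * a ^ q) ^ ((d : ℝ) / q - 1) * Real.exp (-(β * a ^ q)) := by
  have hq0 : (0:ℝ) < q := by linarith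
  have ha0 : (0:ℝ) < a := lt_of_lt_of_le (Real.rpow_pos_of_pos hβ _) ha
  have hz : 1 ≤ β * a ^ q := by
    have h1 : (β ^ (-1/q) : ℝ) ^ q = β ^ (-1:ℝ) := by
      rw [← Real.rpow_mul hβ.le]
      congr 1
      field_simp
    have h2 : (β:ℝ) ^ (-1:ℝ) ≤ a ^ q := by
      rw [← h1]
      exact Real.rpow_le_rpow (Real.rpow_pos_of_pos hβ _).le ha hq0.le
    calc (1:ℝ) = β * β ^ (-1:ℝ) := by
          rw [Real.rpow_neg_one, mul_inv_cancel₀ hβ.ne']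
      _ ≤ β * a ^ q := mul_le_mul_of_nonneg_left h2 hβ.le
  have hCn0 : 0 ≤ Cn := le_trans (abs_nonneg _) (hCn 0)
  rcases Nat.eq_zero_or_pos d with hd0 | hd1
  · subst hd0
    have hT : (Set.Icc (fun _ => -a : Fin 0 → ℝ) (fun _ => a))ᶜ = ∅ :=
      Set.eq_empty_iff_forall_notMem.2 fun x hx =>
        hx ⟨fun i => i.elim0, fun i => i.elim0⟩
    rw [hT]
    simp only [Measure.restrict_empty, integral_zero_measure, abs_zero,
      Nat.cast_zero, pow_zero]
    rw [show (1:ℝ) * 0 = 0 from by ring, zero_div]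
    simp
  · -- main case
    have hdR : (1:ℝ) ≤ (d:ℝ) := by exact_mod_cast hd1
    set W : Set (Fin d → ℝ) := (Metric.closedBall (0 : Fin d → ℝ) a)ᶜ with hWdef
    have hnormle : ∀ x : Fin d → ℝ, |h x| ≤ Cn * Real.exp (-(β * ‖x‖ ^ q)) := by
      intro x
      have h1 := hCn x
      rw [abs_mul, abs_of_pos (Real.exp_pos _)] at h1
      have hpn : ‖x‖ ≤ pnorm d p x := norm_le_pnorm d p hp x
      have ht : β * ‖x‖ ^ q ≤ β * pnorm d p x ^ q :=
        mul_le_mul_of_nonneg_left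
          (Real.rpow_le_rpow (norm_nonneg x) hpn hq0.le) hβ.le
      have h2 : |h x| ≤ Cn * Real.exp (-(β * pnorm d p x ^ q)) := by
        rw [Real.exp_neg, ← div_eq_mul_inv, le_div_iff₀ (Real.exp_pos _)]
        linarith [h1, mul_comm (|h x|) (Real.exp (β * pnorm d p x ^ q))]
      calc |h x| ≤ Cn * Real.exp (-(β * pnorm d p x ^ q)) := h2
        _ ≤ Cn * Real.exp (-(β * ‖x‖ ^ q)) :=
          mul_le_mul_of_nonneg_left (Real.exp_le_exp.2 (by linarith)) hCn0
    have hT : (Set.Icc (fun _ => -a : Fin d → ℝ) (fun _ => a))ᶜ = W := by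
      rw [hWdef]
      congr 1
      ext x
      simp only [Set.mem_Icc, Metric.mem_closedBall, dist_zero_right]
      rw [pi_norm_le_iff_of_nonneg ha0.le]
      constructor
      · rintro ⟨h1, h2⟩ i
        rw [Real.norm_eq_abs, abs_le]
        exact ⟨h1 i, h2 i⟩
      · intro hnorm
        constructor <;> intro i <;>
          [exact (abs_le.1 (by simpa using hnorm i)).1;
           exact (abs_le.1 (by simpa using hnorm i)).2]
    rw [hT]
    -- integrability of the dominating function
    have hcontE : Continuous fun x : Fin d → ℝ => Real.exp (-(β * ‖x‖ ^ q)) := by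
      apply Real.continuous_exp.comp
      apply Continuous.neg
      apply continuous_const.mul
      exact (Real.continuous_rpow_const hq0.le).comp continuous_norm
    set Kv : ℝ := ∫ u in Ioi a,
      β * q * u ^ (q - 1) * Real.exp (-(β * u ^ q)) * ((2*u) ^ d - (2*a) ^ d)
      with hKvdef
    have hEint : IntegrableOn (fun x : Fin d → ℝ => Real.exp (-(β * ‖x‖ ^ q))) W := by
      constructor
      · exact hcontE.aestronglyMeasurable
      · rw [hasFiniteIntegral_iff_ofReal (ae_of_all _ fun x => (Real.exp_pos _).le)]
        rw [lint_main hβ hq ha0 d]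
        exact ENNReal.ofReal_lt_top
    have hKvnn : 0 ≤ Kv := by
      rw [hKvdef]
      apply setIntegral_nonneg measurableSet_Ioi
      intro u hu
      have hau : a < u := hu
      have hu0 : (0:ℝ) < u := ha0.trans hau
      have h1 : (0:ℝ) ≤ u ^ (q - 1) := Real.rpow_nonneg hu0.le _
      have h2 : (0:ℝ) ≤ (2*u) ^ d - (2*a) ^ d := by
        have : (2*a) ^ d ≤ (2*u) ^ d := pow_le_pow_left₀ (by linarith) (by linarith) d
        linarith
      positivity
    have hEeq : ∫ x in W, Real.exp (-(β * ‖x‖ ^ q)) = Kv := by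
      have hInn : 0 ≤ ∫ x in W, Real.exp (-(β * ‖x‖ ^ q)) :=
        integral_nonneg fun x => (Real.exp_pos _).le
      apply (ENNReal.ofReal_eq_ofReal_iff hInn hKvnn).1
      rw [ofReal_integral_eq_lintegral_ofReal hEint
        (ae_of_all _ fun x => (Real.exp_pos _).le), lint_main hβ hq ha0 d]
    -- main chain
    set N : ℕ := (Nat.ceil ((d : ℝ) / q)).factorial with hNdef
    have hHb : ∫ u in Ioi a, u ^ ((d:ℝ) - 1) * Real.exp (-(β * u ^ q)) ≤
        (N : ℝ) / (β * q) * (a ^ ((d:ℝ) - q) * Real.exp (-(β * a ^ q))) := by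
      have := Hbound hβ hq (Nat.ceil ((d : ℝ) / q)) ((d:ℝ) - 1)
        (by rw [show (d:ℝ) - 1 + 1 = (d:ℝ) from by ring]; exact Nat.le_ceil _)
        ha0 hz
      rw [show (d:ℝ) - 1 + 1 - q = (d:ℝ) - q from by ring] at this
      exact this
    have chain : |∫ x in W, h x| ≤
        Cn * (2 ^ d * (d:ℝ) *
          ((N : ℝ) / (β * q) * (a ^ ((d:ℝ) - q) * Real.exp (-(β * a ^ q))))) := by
      calc |∫ x in W, h x| ≤ ∫ x in W, |h x| := by
            rw [← Real.norm_eq_abs]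
            exact (norm_integral_le_integral_norm h).trans_eq
              (by simp [Real.norm_eq_abs])
        _ ≤ ∫ x in W, Cn * Real.exp (-(β * ‖x‖ ^ q)) :=
            integral_mono_of_nonneg (ae_of_all _ fun x => abs_nonneg _)
              (hEint.const_mul Cn) (ae_of_all _ hnormle)
        _ = Cn * ∫ x in W, Real.exp (-(β * ‖x‖ ^ q)) := integral_const_mul Cn _
        _ = Cn * Kv := by rw [hEeq]
        _ = Cn * (2 ^ d * (d:ℝ) *
              ∫ u in Ioi a, u ^ ((d:ℝ) - 1) * Real.exp (-(β * u ^ q))) := by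
            rw [hKvdef, Kval hβ hq ha0 hd1]
        _ ≤ _ := by
            apply mul_le_mul_of_nonneg_left _ hCn0
            apply mul_le_mul_of_nonneg_left hHb
            positivity
    refine chain.trans (le_of_eq ?_)
    -- final algebra
    have e2 : (β * a ^ q) ^ ((d:ℝ)/q - 1) =
        β ^ ((d:ℝ)/q) * β⁻¹ * a ^ ((d:ℝ) - q) := by
      rw [Real.mul_rpow hβ.le (Real.rpow_nonneg ha0.le q),
        ← Real.rpow_mul ha0.le,
        show q * ((d:ℝ)/q - 1) = (d:ℝ) - q from by field_simp,
        show (d:ℝ)/q - 1 = (d:ℝ)/q + (-1) from by ring,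
        Real.rpow_add hβ, Real.rpow_neg_one]
    rw [e2]
    have hβs : (0:ℝ) < β ^ ((d:ℝ)/q) := Real.rpow_pos_of_pos hβ _
    field_simp
end
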